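/- arXiv:1702.07169 — 2 statements merged into one kernel-verified Lean document; each statement's English description precedes it below -/
import Mathlib

section
/- Let M be a continuous nonnegative martingale with M₀ = m almost surely, where 0 < m < k, and let σ be a stopping time such that (M_{t∧σ})_{t≥0} is uniformly integrable. Let α > 1. If P(M_σ > k) > 0, then E[|M_σ − k|] − |m − k| > E[|M_σ − αk|] − |m − αk|. -/
open MeasureTheory ProbabilityTheory Real Filter Set Topology

noncomputable section

private lemma abs_sub_eq_min' (x c : ℝ) : |x - c| = x + c - 2 * min x c := by
  rcases le_total x c with h | h
  · rw [abs_of_nonpos (sub_nonpos.2 h), min_eq_left h]; ring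
  · rw [abs_of_nonneg (sub_nonneg.2 h), min_eq_right h]; ring

/-- For a continuous nonnegative martingale `M` started at
`m ∈ (0, k)`, a stopping time `σ` whose stopped process is uniformly
integrable, and `α > 1`: if `P(M_σ > k) > 0` then
`E[|M_σ - k|] - |m - k| > E[|M_σ - αk|] - |m - αk|`
(a strict comparison of the expected local times at `k` and `αk`). -/
theorem expected_localtime_strict_comparison
    {Ω : Type*} {mΩ : MeasurableSpace Ω} (P : Measure Ω) [IsProbabilityMeasure P]
    (F : MeasureTheory.Filtration ℝ mΩ) (M : ℝ → Ω → ℝ)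
    (hmart : MeasureTheory.Martingale M F P)
    (hcont : ∀ᵐ ω ∂P, Continuous fun t => M t ω)
    (hnonneg : ∀ t : ℝ, ∀ᵐ ω ∂P, 0 ≤ M t ω)
    (m k α : ℝ) (hm0 : 0 < m) (hmk : m < k) (hα : 1 < α)
    (hstart : ∀ᵐ ω ∂P, M 0 ω = m)
    (σ : Ω → ℝ) (hσ : MeasureTheory.IsStoppingTime F (fun ω => (σ ω : WithTop ℝ))) (hσ0 : ∀ ω, 0 ≤ σ ω)
    (hUI : MeasureTheory.UniformIntegrable
      (fun t : ℝ => fun ω => M (min (max t 0) (σ ω)) ω) 1 P)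
    (hpos : 0 < P {ω | k < M (σ ω) ω}) :
    (∫ ω, |M (σ ω) ω - α * k| ∂P) - |m - α * k| <
      (∫ ω, |M (σ ω) ω - k| ∂P) - |m - k| := by
  have hk0 : 0 < k := hm0.trans hmk
  have hkak : k < α * k := by nlinarith
  set f : Ω → ℝ := fun ω => M (σ ω) ω with hf_def
  obtain ⟨hmeas, -, C, hC⟩ := hUI
  -- the stopped values at integer times converge (eventually constantly) to `f`
  set fn : ℕ → Ω → ℝ := fun n ω => M (min (max (n : ℝ) 0) (σ ω)) ω with hfn_def
  have htend : ∀ ω, Tendsto (fun n => fn n ω) atTop (𝓝 (f ω)) := by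
    intro ω
    apply tendsto_atTop_of_eventually_const (i₀ := ⌈σ ω⌉₊)
    intro n hn
    have h1 : min (max (n : ℝ) 0) (σ ω) = σ ω := by
      rw [max_eq_left (by positivity), min_eq_right]
      exact le_trans (Nat.le_ceil _) (by exact_mod_cast hn)
    show M ((max (n:ℝ) 0) ⊓ σ ω) ω = f ω
    rw [h1]
  have hfn_meas : ∀ n : ℕ, AEStronglyMeasurable (fn n) P := fun n => hmeas (n : ℝ)
  have hf_meas : AEStronglyMeasurable f P :=
    aestronglyMeasurable_of_tendsto_ae atTop hfn_meas
      (Filter.Eventually.of_forall htend)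
  have hf_int : Integrable f P := by
    rw [← memLp_one_iff_integrable]
    refine ⟨hf_meas, ?_⟩
    have hle := MeasureTheory.Lp.eLpNorm_lim_le_liminf_eLpNorm hfn_meas f
      (Filter.Eventually.of_forall htend) (p := 1)
    refine lt_of_le_of_lt (hle.trans ?_) (lt_top_iff_ne_top.2 (ENNReal.coe_ne_top (r := C)))
    exact Filter.liminf_le_of_frequently_le
      (Filter.Frequently.of_forall fun n => hC (n : ℝ)) (by isBoundedDefault)
  -- the comparison function
  set g : Ω → ℝ := fun ω => min (f ω) (α * k) - min (f ω) k with hg_def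
  have hg_nonneg : ∀ ω, 0 ≤ g ω := fun ω =>
    sub_nonneg.2 (min_le_min le_rfl hkak.le)
  have hg_meas : AEStronglyMeasurable g P :=
    (hf_meas.inf aestronglyMeasurable_const).sub (hf_meas.inf aestronglyMeasurable_const)
  have hg_int : Integrable g P := by
    refine Integrable.mono' (integrable_const (α * k - k)) hg_meas
      (Filter.Eventually.of_forall fun ω => ?_)
    rw [Real.norm_eq_abs, abs_of_nonneg (hg_nonneg ω)]
    rcases le_total (f ω) k with h | h
    · simp only [g, min_eq_left h, min_eq_left (h.trans hkak.le), sub_self]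
      linarith
    · have : min (f ω) (α * k) ≤ α * k := min_le_right _ _
      simp only [g, min_eq_right h]
      linarith
  have hg_pos : 0 < ∫ ω, g ω ∂P := by
    rw [integral_pos_iff_support_of_nonneg_ae
      (Filter.Eventually.of_forall hg_nonneg) hg_int]
    refine lt_of_lt_of_le hpos (measure_mono ?_)
    intro ω hω
    have hω' : k < f ω := hω
    have h1 : min (f ω) k = k := min_eq_right hω'.le
    have h2 : k < min (f ω) (α * k) := lt_min hω' hkak
    simp only [Function.mem_support, g, h1]
    linarith
  have hint1 : Integrable (fun ω => |f ω - k|) P := (hf_int.sub (integrable_const k)).abs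
  have hint2 : Integrable (fun ω => |f ω - α * k|) P :=
    (hf_int.sub (integrable_const (α * k))).abs
  have hdiff : (∫ ω, |f ω - α * k| ∂P) - (∫ ω, |f ω - k| ∂P)
      = (α * k - k) - 2 * ∫ ω, g ω ∂P := by
    rw [← integral_sub hint2 hint1]
    have hpt : ∀ ω, |f ω - α * k| - |f ω - k| = (α * k - k) - 2 * g ω := by
      intro ω
      rw [abs_sub_eq_min' (f ω) (α * k), abs_sub_eq_min' (f ω) k]
      simp only [g]; ring
    calc ∫ ω, (|f ω - α * k| - |f ω - k|) ∂P
        = ∫ ω, ((α * k - k) - 2 * g ω) ∂P := by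
          exact integral_congr_ae (Filter.Eventually.of_forall hpt)
      _ = (α * k - k) - 2 * ∫ ω, g ω ∂P := by
          rw [integral_sub (integrable_const _) (hg_int.const_mul 2), integral_const,
            integral_const_mul]
          simp
  have habs1 : |m - k| = k - m := by rw [abs_of_neg (by linarith)]; ring
  have habs2 : |m - α * k| = α * k - m := by
    rw [abs_of_neg (by nlinarith)]; ring
  have hgoal : (∫ ω, |f ω - α * k| ∂P) - |m - α * k| <
      (∫ ω, |f ω - k| ∂P) - |m - k| := by
    rw [habs1, habs2]; linarith
  exact hgoal
end
end

section
/- Let (p*, q*) be an optimal primal solution and (ν*, η*) an optimal dual solution of the discrete linear programming pair (P^N, D^N), satisfying the complementary slackness conditions. Let τ̄ denote the randomized stopping time of the random walk Y determined by (p*, q*), and set η̃*_{j,t} = η*_{j,t} + F̄^N_{j,t}. Then for every (j,t) with p*_{j,t} > 0, η̃*_{j,t} = E^{(j,t)}[F̄^N_{Y_{τ̄}, τ̄} − ∑_{s=t}^{τ̄−1} ν*_{Y_s}], where E^{(j,t)} is expectation for the walk started at site j at time t. -/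
open Real Filter Set MeasureTheory
open scoped ENNReal

noncomputable section
open scoped Classical

/-- Discretized payoff on the grid: `F̄^N_{j,t} = (exp(βj/√N)(cosh(β/√N))^{-t} - k)₊`. -/
def FbarD (β k : ℝ) (N : ℕ) (j : ℤ) (t : ℕ) : ℝ :=
  max (Real.exp (β * j / Real.sqrt N) * Real.cosh (β / Real.sqrt N) ^ (-(t : ℤ)) - k) 0

/-- The discrete curve `K^N_j`: the unique real with
`exp(β x^N_j)(cosh(β/√N))^{-K^N_j} = k`, so `F̄^N_{j,t} > 0` iff `t < K^N_j`. -/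
def KN (β k : ℝ) (N : ℕ) (j : ℤ) : ℝ :=
  (β * j / Real.sqrt N - Real.log k) / Real.log (Real.cosh (β / Real.sqrt N))

/-- The stopped-mass variables `q` determined by the running-mass variables `p`:
`q_{j,t} = ½(p_{j-1,t-1} + p_{j+1,t-1}) - p_{j,t}` for `t ≥ 2`, with the initial
unit of mass split between `j*±1` at time `1`. -/
def qOf (jstar : ℤ) (p : ℤ → ℕ → ℝ) (j : ℤ) (t : ℕ) : ℝ :=
  if t = 0 then 0
  else if t = 1 then
    ((if j = jstar + 1 then (1 : ℝ) / 2 else 0) +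
      (if j = jstar - 1 then (1 : ℝ) / 2 else 0)) - p j 1
  else (p (j - 1) (t - 1) + p (j + 1) (t - 1)) / 2 - p j t

/-- The potential bound `U^N_j = √N(∑_i |x^N_i - x^N_j| μ^N({x^N_i}) - |x^N_{j*} - x^N_j|)`,
where `x^N_i = i/√N`. -/
def UN (N : ℕ) (jstar : ℤ) (μN : ℤ → ℝ) (j : ℤ) : ℝ :=
  Real.sqrt N * ((∑' i : ℤ, |(i : ℝ) / Real.sqrt N - (j : ℝ) / Real.sqrt N| * μN i) -
    |(jstar : ℝ) / Real.sqrt N - (j : ℝ) / Real.sqrt N|)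

/-- Feasibility for the discrete primal linear program `P^N` (with the grid
`{j₀, …, j_L}`, starting site `j*` and potential bounds `U`): `p` is a
summable nonnegative family, all stopped masses `q` are nonnegative, the
initial unit of mass is split between `(j*±1, 1)`, `p` vanishes outside the
interior of the grid, and the potential constraints hold. -/
def PrimalFeasible (j0 jL jstar : ℤ) (U : ℤ → ℝ) (p : ℤ → ℕ → ℝ) : Prop :=
  Summable (fun jt : ℤ × ℕ => p jt.1 jt.2) ∧
  (∀ j t, 0 ≤ p j t) ∧
  (∀ j t, 2 ≤ t → 0 ≤ qOf jstar p j t) ∧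
  p (jstar + 1) 1 ≤ 1 / 2 ∧ p (jstar - 1) 1 ≤ 1 / 2 ∧
  (∀ j, j ≠ jstar + 1 → j ≠ jstar - 1 → p j 1 = 0) ∧
  (∀ j, p j 0 = 0) ∧
  (∀ j t, j ≤ j0 ∨ jL ≤ j → p j t = 0) ∧
  (∀ j, j0 < j → j < jL → (if j = jstar then (1 : ℝ) else 0) + ∑' t, p j t ≤ U j)

/-- The objective of the primal LP: `∑_{j,t} F̄^N_{j,t} q_{j,t}`. -/
def PrimalObj (β k : ℝ) (N : ℕ) (jstar : ℤ) (p : ℤ → ℕ → ℝ) : ℝ :=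
  ∑' jt : ℤ × ℕ, FbarD β k N jt.1 jt.2 * qOf jstar p jt.1 jt.2

/-- Feasibility for the discrete dual linear program `D^N`: nonnegative bounded
multipliers `(ν, η)` satisfying the superhedging constraint
`½(η_{j+1,t+1} + η_{j-1,t+1}) - η_{j,t} - ν_j ≤ F̄^N_{j,t} - ½(F̄^N_{j+1,t+1} + F̄^N_{j-1,t+1})`. -/
def DualFeasible (β k : ℝ) (N : ℕ) (ν : ℤ → ℝ) (η : ℤ → ℕ → ℝ) : Prop :=
  (∀ j, 0 ≤ ν j) ∧ (∀ j t, 0 ≤ η j t) ∧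
  (∃ C : ℝ, ∀ j t, η j t ≤ C) ∧ (∃ C : ℝ, ∀ j, ν j ≤ C) ∧
  (∀ (j : ℤ) (t : ℕ),
    (η (j + 1) (t + 1) + η (j - 1) (t + 1)) / 2 - η j t - ν j ≤
      FbarD β k N j t - (FbarD β k N (j + 1) (t + 1) + FbarD β k N (j - 1) (t + 1)) / 2)

/-- The complementary slackness conditions for the primal-dual pair `(P^N, D^N)`. -/
def ComplementarySlack (β k : ℝ) (N : ℕ) (j0 jL jstar : ℤ) (U : ℤ → ℝ)
    (p : ℤ → ℕ → ℝ) (ν : ℤ → ℝ) (η : ℤ → ℕ → ℝ) : Prop :=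
  (∀ (j : ℤ) (t : ℕ), 0 < p j t →
    (η (j + 1) (t + 1) + η (j - 1) (t + 1)) / 2 - η j t - ν j =
      FbarD β k N j t - (FbarD β k N (j + 1) (t + 1) + FbarD β k N (j - 1) (t + 1)) / 2) ∧
  (∀ (j : ℤ) (t : ℕ), 0 < qOf jstar p j t → η j t = 0) ∧
  (∀ j : ℤ, j0 < j → j < jL → 0 < ν j →
    (if j = jstar then (1 : ℝ) else 0) + ∑' t, p j t = U j)

set_option maxHeartbeats 3200000 in
/-- For optimal primal-dual solutions of `(P^N, D^N)`
satisfying complementary slackness, and `η̃* = η* + F̄^N`, one has, at every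
site `(j,t)` with `p*_{j,t} > 0`,
`η̃*_{j,t} = E^{(j,t)}[F̄^N_{Y_τ̄, τ̄} - ∑_{s=t}^{τ̄-1} ν*_{Y_s}]`,
where the expectation is over the random walk started at site `j` at time `t`,
stopped by the randomized stopping time `τ̄` determined by `(p*, q*)`. -/
theorem dual_optimizer_representation
    (N : ℕ) (hN : 0 < N) (β k : ℝ) (hβ : 0 < β) (hk : 0 < k)
    (j0 jL jstar : ℤ) (hj : j0 < jstar - 1) (hj' : jstar + 1 < jL)
    (μN : ℤ → ℝ) (hμpos : ∀ i, 0 ≤ μN i)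
    (hμsupp : ∀ i, i < j0 ∨ jL < i → μN i = 0)
    (hμmass : ∑' i : ℤ, μN i = 1)
    (p : ℤ → ℕ → ℝ)
    (hfeas : PrimalFeasible j0 jL jstar (UN N jstar μN) p)
    (hopt : ∀ p' : ℤ → ℕ → ℝ, PrimalFeasible j0 jL jstar (UN N jstar μN) p' →
      PrimalObj β k N jstar p' ≤ PrimalObj β k N jstar p)
    (ν : ℤ → ℝ) (η : ℤ → ℕ → ℝ)
    (hdual : DualFeasible β k N ν η)
    (hdualopt : ∀ (ν' : ℤ → ℝ) (η' : ℤ → ℕ → ℝ), DualFeasible β k N ν' η' →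
      (∑' j : ℤ, ν j * UN N jstar μN j) +
          (η (jstar + 1) 1 + η (jstar - 1) 1) / 2 +
          (FbarD β k N (jstar + 1) 1 + FbarD β k N (jstar - 1) 1) / 2 ≤
        (∑' j : ℤ, ν' j * UN N jstar μN j) +
          (η' (jstar + 1) 1 + η' (jstar - 1) 1) / 2 +
          (FbarD β k N (jstar + 1) 1 + FbarD β k N (jstar - 1) 1) / 2)
    (hCS : ComplementarySlack β k N j0 jL jstar (UN N jstar μN) p ν η)
    -- the site `(j,t)` lies in the support of the primal optimizer
    (j : ℤ) (t : ℕ) (hp : 0 < p j t)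
    -- a random walk started at site `j` at time `t`, stopped according to the
    -- randomized stopping rule determined by `(p, q)`
    {Ω : Type*} {mΩ : MeasurableSpace Ω} (P : Measure Ω) [IsProbabilityMeasure P]
    (Y : ℕ → Ω → ℤ) (τ : Ω → ℕ)
    (hYmeas : ∀ n, Measurable (Y n)) (hτmeas : Measurable τ)
    (hstart : ∀ᵐ ω ∂P, Y t ω = j)
    (hcont : ∀ᵐ ω ∂P, t + 1 ≤ τ ω)
    (hwalk : ∀ s : ℕ, t ≤ s → ∀ i : ℤ,
      P {ω | s < τ ω ∧ Y s ω = i ∧ Y (s + 1) ω = i + 1} =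
        P {ω | s < τ ω ∧ Y s ω = i} / 2 ∧
      P {ω | s < τ ω ∧ Y s ω = i ∧ Y (s + 1) ω = i - 1} =
        P {ω | s < τ ω ∧ Y s ω = i} / 2)
    (hstop : ∀ s : ℕ, t + 1 ≤ s → ∀ i : ℤ,
      P {ω | τ ω = s ∧ Y s ω = i} * ENNReal.ofReal (p i s + qOf jstar p i s) =
        P {ω | s ≤ τ ω ∧ Y s ω = i} * ENNReal.ofReal (qOf jstar p i s))
    (hτint : Integrable (fun ω => (τ ω : ℝ)) P) :
    η j t + FbarD β k N j t =
      ∫ ω, (FbarD β k N (Y (τ ω) ω) (τ ω) -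
        ∑ s ∈ Finset.Ico t (τ ω), ν (Y s ω)) ∂P := by
  classical
  obtain ⟨hpsum, hp0, hq0, hp1a, hp1b, hp1z, hp00, hpbd, hpot⟩ := hfeas
  obtain ⟨hν0, hη0, ⟨Cη, hCη⟩, ⟨Cν, hCν⟩, hdc⟩ := hdual
  obtain ⟨hcs1, hcs2, hcs3⟩ := hCS
  have ht1 : 1 ≤ t := by
    by_contra h
    have ht0 : t = 0 := by omega
    rw [ht0, hp00 j] at hp
    exact lt_irrefl 0 hp
  -- nonnegative versions of the bounds
  set Cν' := max Cν 0 with hCν'def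
  set Cη' := max Cη 0 with hCη'def
  have hCν'0 : (0:ℝ) ≤ Cν' := le_max_right _ _
  have hCν'' : ∀ i, ν i ≤ Cν' := fun i => le_trans (hCν i) (le_max_left _ _)
  have hCη'' : ∀ i s, η i s ≤ Cη' := fun i s => le_trans (hCη i s) (le_max_left _ _)
  have hCη'0 : (0:ℝ) ≤ Cη' := le_max_right _ _
  set CF := Real.exp (β * jL / Real.sqrt N) with hCFdef
  have hCF0 : (0:ℝ) ≤ CF := (Real.exp_pos _).le
  have hF0 : ∀ (i : ℤ) (s : ℕ), 0 ≤ FbarD β k N i s := fun i s => le_max_right _ _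
  have hsqrtN : (0:ℝ) < Real.sqrt N := Real.sqrt_pos.2 (by exact_mod_cast hN)
  have hFle : ∀ (i : ℤ), i ≤ jL → ∀ s : ℕ, FbarD β k N i s ≤ CF := by
    intro i hi s
    have hz : Real.cosh (β / Real.sqrt N) ^ (-(s:ℤ)) ≤ 1 :=
      zpow_le_one_of_nonpos₀ (Real.one_le_cosh _) (by omega)
    have hz0 : (0:ℝ) ≤ Real.cosh (β / Real.sqrt N) ^ (-(s:ℤ)) := by positivity
    have he : Real.exp (β * i / Real.sqrt N) ≤ CF := by
      rw [hCFdef, Real.exp_le_exp]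
      gcongr
    have hee : Real.exp (β * i / Real.sqrt N) * Real.cosh (β / Real.sqrt N) ^ (-(s:ℤ)) ≤ CF :=
      le_trans (mul_le_of_le_one_right (Real.exp_pos _).le hz) he
    exact max_le (by linarith) hCF0
  have hinterior : ∀ (i : ℤ) (s : ℕ), 0 < p i s → j0 < i ∧ i < jL := by
    intro i s h
    by_contra hc
    have hio : i ≤ j0 ∨ jL ≤ i := by omega
    rw [hpbd i s hio] at h
    exact lt_irrefl 0 h
  -- p + q = average of neighbours
  have hpq_eq : ∀ (i : ℤ) (n : ℕ), 1 ≤ n →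
      p i (n+1) + qOf jstar p i (n+1) = (p (i-1) n + p (i+1) n) / 2 := by
    intro i n hn
    have h0 : ¬ (n+1 = 0) := by omega
    have h1 : ¬ (n+1 = 1) := by omega
    simp only [qOf, if_neg h0, if_neg h1, Nat.add_sub_cancel]
    ring
  -- measurable sets
  have mA : ∀ (n : ℕ) (i : ℤ), MeasurableSet {ω | n < τ ω ∧ Y n ω = i} := fun n i =>
    (hτmeas measurableSet_Ioi).inter (hYmeas n (measurableSet_singleton i))
  have mB : ∀ (n : ℕ) (i : ℤ), MeasurableSet {ω | n < τ ω ∧ Y (n+1) ω = i} := fun n i =>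
    (hτmeas measurableSet_Ioi).inter (hYmeas (n+1) (measurableSet_singleton i))
  have mD : ∀ (n : ℕ) (i : ℤ), MeasurableSet {ω | τ ω = n ∧ Y n ω = i} := fun n i =>
    (hτmeas (measurableSet_singleton n)).inter (hYmeas n (measurableSet_singleton i))
  have mU : ∀ (n : ℕ) (i : ℤ), MeasurableSet {ω | n < τ ω ∧ Y n ω = i ∧ Y (n+1) ω = i + 1} :=
    fun n i => (hτmeas measurableSet_Ioi).inter
      ((hYmeas n (measurableSet_singleton i)).inter (hYmeas (n+1) (measurableSet_singleton (i+1))))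
  have mV : ∀ (n : ℕ) (i : ℤ), MeasurableSet {ω | n < τ ω ∧ Y n ω = i ∧ Y (n+1) ω = i - 1} :=
    fun n i => (hτmeas measurableSet_Ioi).inter
      ((hYmeas n (measurableSet_singleton i)).inter (hYmeas (n+1) (measurableSet_singleton (i-1))))
  -- on {n < τ, Y n = i}, a.e. the next step is to i ± 1
  have hnull : ∀ n : ℕ, t ≤ n → ∀ i : ℤ,
      P ({ω | n < τ ω ∧ Y n ω = i} \
        ({ω | n < τ ω ∧ Y n ω = i ∧ Y (n+1) ω = i + 1} ∪
         {ω | n < τ ω ∧ Y n ω = i ∧ Y (n+1) ω = i - 1})) = 0 := by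
    intro n hn i
    have hdisj : Disjoint {ω | n < τ ω ∧ Y n ω = i ∧ Y (n+1) ω = i + 1}
        {ω | n < τ ω ∧ Y n ω = i ∧ Y (n+1) ω = i - 1} := by
      rw [Set.disjoint_left]
      rintro ω ⟨_, _, h1⟩ ⟨_, _, h2⟩
      omega
    have hsub : ({ω | n < τ ω ∧ Y n ω = i ∧ Y (n+1) ω = i + 1} ∪
        {ω | n < τ ω ∧ Y n ω = i ∧ Y (n+1) ω = i - 1}) ⊆ {ω | n < τ ω ∧ Y n ω = i} := by
      rintro ω (⟨h1, h2, _⟩ | ⟨h1, h2, _⟩) <;> exact ⟨h1, h2⟩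
    rw [measure_diff hsub ((mU n i).union (mV n i)).nullMeasurableSet (measure_ne_top P _),
      measure_union hdisj (mV n i), (hwalk n hn i).1, (hwalk n hn i).2,
      ENNReal.add_halves, tsub_self]
  -- flow: positive mass at (i, n+1) comes from a neighbour at time n
  have hflow : ∀ n : ℕ, t ≤ n → ∀ i : ℤ, P {ω | n < τ ω ∧ Y (n + 1) ω = i} ≠ 0 →
      P {ω | n < τ ω ∧ Y n ω = i - 1} ≠ 0 ∨ P {ω | n < τ ω ∧ Y n ω = i + 1} ≠ 0 := by
    intro n hn i h
    by_contra hc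
    push_neg at hc
    apply h
    have hsub : {ω | n < τ ω ∧ Y (n + 1) ω = i} ⊆
        ({ω | n < τ ω ∧ Y n ω = i - 1} ∪ {ω | n < τ ω ∧ Y n ω = i + 1}) ∪
        ⋃ i' : ℤ, ({ω | n < τ ω ∧ Y n ω = i'} \
          ({ω | n < τ ω ∧ Y n ω = i' ∧ Y (n+1) ω = i' + 1} ∪
           {ω | n < τ ω ∧ Y n ω = i' ∧ Y (n+1) ω = i' - 1})) := by
      rintro ω ⟨h1, h2⟩
      by_cases hY : Y (n+1) ω = Y n ω + 1 ∨ Y (n+1) ω = Y n ω - 1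
      · rcases hY with h3 | h3
        · exact Or.inl (Or.inl ⟨h1, by omega⟩)
        · exact Or.inl (Or.inr ⟨h1, by omega⟩)
      · push_neg at hY
        refine Or.inr (Set.mem_iUnion.2 ⟨Y n ω, ⟨⟨h1, rfl⟩, ?_⟩⟩)
        rintro (⟨_, _, h3⟩ | ⟨_, _, h3⟩)
        · exact hY.1 h3
        · exact hY.2 h3
    exact measure_mono_null hsub
      (measure_union_null (measure_union_null hc.1 hc.2)
        (measure_iUnion_null fun i' => hnull n hn i'))
  -- the continuing walk lives on the support of p
  have hsupp : ∀ s : ℕ, t ≤ s → ∀ i : ℤ, P {ω | s < τ ω ∧ Y s ω = i} ≠ 0 → 0 < p i s := by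
    intro s hs
    induction s, hs using Nat.le_induction with
    | base =>
      intro i hi
      rcases eq_or_ne i j with rfl | hij
      · exact hp
      · exfalso
        apply hi
        apply measure_mono_null _ (ae_iff.1 hstart)
        rintro ω ⟨_, h2⟩
        simp only [Set.mem_setOf_eq]
        rw [h2]
        exact hij
    | succ n hn ih =>
      intro i hi
      have hm' : P {ω | n < τ ω ∧ Y (n+1) ω = i} ≠ 0 := by
        intro h
        apply hi
        refine measure_mono_null ?_ h
        rintro ω ⟨h1, h2⟩
        exact ⟨by omega, h2⟩
      have hpq : 0 < p (i-1) n + p (i+1) n := by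
        rcases hflow n hn i hm' with h | h
        · have := ih _ h
          linarith [hp0 (i+1) n]
        · have := ih _ h
          linarith [hp0 (i-1) n]
      by_contra hple
      have hpz : p i (n+1) = 0 := le_antisymm (not_lt.1 hple) (hp0 _ _)
      have hqpos : 0 < qOf jstar p i (n+1) := by
        have := hpq_eq i n (by omega)
        rw [hpz, zero_add] at this
        linarith
      have hsplit : P {ω | n+1 ≤ τ ω ∧ Y (n+1) ω = i} =
          P {ω | τ ω = n+1 ∧ Y (n+1) ω = i} + P {ω | n+1 < τ ω ∧ Y (n+1) ω = i} := by
        rw [← measure_union _ (mA (n+1) i)]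
        · congr 1
          ext ω
          simp only [Set.mem_union, Set.mem_setOf_eq]
          constructor
          · rintro ⟨h1, h2⟩
            rcases eq_or_lt_of_le h1 with h | h
            · exact Or.inl ⟨h.symm, h2⟩
            · exact Or.inr ⟨h, h2⟩
          · rintro (⟨h1, h2⟩ | ⟨h1, h2⟩) <;> exact ⟨by omega, h2⟩
        · rw [Set.disjoint_left]
          rintro ω ⟨h1, _⟩ ⟨h2, _⟩
          omega
      have hst := hstop (n+1) (by omega) i
      rw [hpz, zero_add, hsplit, add_mul] at hst
      have hfin : P {ω | τ ω = n+1 ∧ Y (n+1) ω = i} * ENNReal.ofReal (qOf jstar p i (n+1)) ≠ ∞ :=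
        ENNReal.mul_ne_top (measure_ne_top P _) ENNReal.ofReal_ne_top
      have hmz : P {ω | n+1 < τ ω ∧ Y (n+1) ω = i} * ENNReal.ofReal (qOf jstar p i (n+1)) = 0 := by
        have h' : P {ω | τ ω = n+1 ∧ Y (n+1) ω = i} * ENNReal.ofReal (qOf jstar p i (n+1)) + 0 =
            P {ω | τ ω = n+1 ∧ Y (n+1) ω = i} * ENNReal.ofReal (qOf jstar p i (n+1)) +
            P {ω | n+1 < τ ω ∧ Y (n+1) ω = i} * ENNReal.ofReal (qOf jstar p i (n+1)) := by
          rw [add_zero]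
          exact hst
        exact ((ENNReal.add_right_inj hfin).1 h').symm
      rcases mul_eq_zero.1 hmz with h | h
      · exact hi h
      · rw [ENNReal.ofReal_eq_zero] at h
        linarith
  -- where the walk stops, q is positive (hence η vanishes) and the site is on the grid
  have hstopq : ∀ s : ℕ, t + 1 ≤ s → ∀ i : ℤ,
      P {ω | τ ω = s ∧ Y s ω = i} ≠ 0 → 0 < qOf jstar p i s ∧ i ≤ jL := by
    intro s hs i hd
    obtain ⟨n, rfl⟩ : ∃ n, s = n + 1 := ⟨s - 1, by omega⟩
    have hn : t ≤ n := by omega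
    have hm' : P {ω | n < τ ω ∧ Y (n+1) ω = i} ≠ 0 := by
      intro h
      apply hd
      refine measure_mono_null ?_ h
      rintro ω ⟨h1, h2⟩
      exact ⟨by omega, h2⟩
    have hnbp : (0 < p (i-1) n ∧ i - 1 < jL) ∨ (0 < p (i+1) n ∧ i + 1 < jL) := by
      rcases hflow n hn i hm' with h | h
      · exact Or.inl ⟨hsupp n hn _ h, (hinterior _ _ (hsupp n hn _ h)).2⟩
      · exact Or.inr ⟨hsupp n hn _ h, (hinterior _ _ (hsupp n hn _ h)).2⟩
    have hile : i ≤ jL := by rcases hnbp with ⟨_, h⟩ | ⟨_, h⟩ <;> omega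
    have hpqpos : 0 < p i (n+1) + qOf jstar p i (n+1) := by
      have := hpq_eq i n (by omega)
      have h2 : 0 < p (i-1) n + p (i+1) n := by
        rcases hnbp with ⟨h, _⟩ | ⟨h, _⟩
        · linarith [hp0 (i+1) n]
        · linarith [hp0 (i-1) n]
      linarith
    refine ⟨?_, hile⟩
    by_contra hqle
    have hqz : qOf jstar p i (n+1) = 0 :=
      le_antisymm (not_lt.1 hqle) (hq0 i (n+1) (by omega))
    have hst := hstop (n+1) (by omega) i
    rw [hqz, ENNReal.ofReal_zero, mul_zero, add_zero] at hst
    rcases mul_eq_zero.1 hst with h | h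
    · exact hd h
    · rw [ENNReal.ofReal_eq_zero] at h
      rw [hqz, add_zero] at hpqpos
      linarith
  -- a.e. statements
  have hae_supp : ∀ n : ℕ, t ≤ n → ∀ᵐ ω ∂P, n < τ ω →
      (0 < p (Y n ω) n ∧ j0 < Y n ω ∧ Y n ω < jL) := by
    intro n hn
    rw [ae_iff]
    have hone : ∀ i : ℤ,
        P {ω | n < τ ω ∧ Y n ω = i ∧ ¬ (0 < p i n ∧ j0 < i ∧ i < jL)} = 0 := by
      intro i
      by_cases hci : 0 < p i n ∧ j0 < i ∧ i < jL
      · apply measure_mono_null _ (measure_empty (μ := P))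
        rintro ω ⟨_, _, h3⟩
        exact (h3 hci).elim
      · have hAz : P {ω | n < τ ω ∧ Y n ω = i} = 0 := by
          by_contra h
          exact hci ⟨hsupp n hn i h, hinterior i n (hsupp n hn i h)⟩
        apply measure_mono_null _ hAz
        rintro ω ⟨h1, h2, _⟩
        exact ⟨h1, h2⟩
    apply measure_mono_null _ (measure_iUnion_null hone)
    intro ω hω
    rw [Set.mem_setOf_eq, Classical.not_imp] at hω
    exact Set.mem_iUnion.2 ⟨Y n ω, ⟨hω.1, rfl, hω.2⟩⟩
  have hae_stop : ∀ s : ℕ, t + 1 ≤ s → ∀ᵐ ω ∂P, τ ω = s →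
      (0 < qOf jstar p (Y s ω) s ∧ Y s ω ≤ jL) := by
    intro s hs
    rw [ae_iff]
    have hone : ∀ i : ℤ,
        P {ω | τ ω = s ∧ Y s ω = i ∧ ¬ (0 < qOf jstar p i s ∧ i ≤ jL)} = 0 := by
      intro i
      by_cases hci : 0 < qOf jstar p i s ∧ i ≤ jL
      · apply measure_mono_null _ (measure_empty (μ := P))
        rintro ω ⟨_, _, h3⟩
        exact (h3 hci).elim
      · have hDz : P {ω | τ ω = s ∧ Y s ω = i} = 0 := by
          by_contra h
          exact hci (hstopq s hs i h)
        apply measure_mono_null _ hDz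
        rintro ω ⟨h1, h2, _⟩
        exact ⟨h1, h2⟩
    apply measure_mono_null _ (measure_iUnion_null hone)
    intro ω hω
    rw [Set.mem_setOf_eq, Classical.not_imp] at hω
    exact Set.mem_iUnion.2 ⟨Y s ω, ⟨hω.1, rfl, hω.2⟩⟩
  have hae_stopτ : ∀ᵐ ω ∂P,
      0 < qOf jstar p (Y (τ ω) ω) (τ ω) ∧ Y (τ ω) ω ≤ jL := by
    have hall : ∀ᵐ ω ∂P, ∀ s : ℕ, t + 1 ≤ s → τ ω = s →
        (0 < qOf jstar p (Y s ω) s ∧ Y s ω ≤ jL) := by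
      rw [ae_all_iff]
      intro s
      by_cases hs : t + 1 ≤ s
      · exact (hae_stop s hs).mono fun ω h _ => h
      · exact Eventually.of_forall fun ω h => absurd h hs
    filter_upwards [hall, hcont] with ω h1 h2
    exact h1 (τ ω) h2 rfl
  -- measurability of the relevant random variables
  have hYτ : Measurable fun ω => Y (τ ω) ω := by
    have h2 : Measurable fun z : Ω × ℕ => Y z.2 z.1 :=
      measurable_from_prod_countable_left fun n => hYmeas n
    exact h2.comp (measurable_id.prodMk hτmeas)
  have hmeasF : Measurable fun ω => FbarD β k N (Y (τ ω) ω) (τ ω) := by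
    have h1 : Measurable fun z : ℤ × ℕ => FbarD β k N z.1 z.2 := measurable_of_countable _
    have h2 : Measurable fun ω => ((Y (τ ω) ω, τ ω) : ℤ × ℕ) := hYτ.prodMk hτmeas
    have h3 : (fun ω => FbarD β k N (Y (τ ω) ω) (τ ω)) =
        (fun z : ℤ × ℕ => FbarD β k N z.1 z.2) ∘ (fun ω => ((Y (τ ω) ω, τ ω) : ℤ × ℕ)) := by
      funext ω; rfl
    rw [h3]
    exact h1.comp h2
  have hmeasS : Measurable fun ω => ∑ s ∈ Finset.Ico t (τ ω), ν (Y s ω) := by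
    have h2 : Measurable fun z : Ω × ℕ => ∑ s ∈ Finset.Ico t z.2, ν (Y s z.1) := by
      apply measurable_from_prod_countable_left
      intro n
      show Measurable fun x : Ω => ∑ s ∈ Finset.Ico t n, ν (Y s x)
      exact Finset.measurable_sum _ fun s _ => (measurable_of_countable ν).comp (hYmeas s)
    have h4 : Measurable fun ω => ((ω, τ ω) : Ω × ℕ) := measurable_id.prodMk hτmeas
    have h3 : (fun ω => ∑ s ∈ Finset.Ico t (τ ω), ν (Y s ω)) =
        (fun z : Ω × ℕ => ∑ s ∈ Finset.Ico t z.2, ν (Y s z.1)) ∘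
          (fun ω => ((ω, τ ω) : Ω × ℕ)) := by
      funext ω; rfl
    rw [h3]
    exact h2.comp h4
  set H : Ω → ℝ := fun ω => FbarD β k N (Y (τ ω) ω) (τ ω) -
      ∑ s ∈ Finset.Ico t (τ ω), ν (Y s ω) with hHdef
  have hHmeas : Measurable H := hmeasF.sub hmeasS
  have hsum_bd : ∀ (n : ℕ) (ω : Ω), n ≤ τ ω →
      |∑ s ∈ Finset.Ico t n, ν (Y s ω)| ≤ Cν' * (τ ω : ℝ) := by
    intro n ω hn
    rw [abs_of_nonneg (Finset.sum_nonneg fun s _ => hν0 _)]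
    calc ∑ s ∈ Finset.Ico t n, ν (Y s ω) ≤ ∑ _s ∈ Finset.Ico t n, Cν' :=
          Finset.sum_le_sum fun s _ => hCν'' _
      _ = ((n - t : ℕ) : ℝ) * Cν' := by rw [Finset.sum_const, Nat.card_Ico, nsmul_eq_mul]
      _ ≤ (τ ω : ℝ) * Cν' := by
          apply mul_le_mul_of_nonneg_right _ hCν'0
          exact_mod_cast (by omega : n - t ≤ τ ω)
      _ = Cν' * (τ ω : ℝ) := mul_comm _ _
  have hHbound : ∀ᵐ ω ∂P, ‖H ω‖ ≤ CF + Cν' * (τ ω : ℝ) := by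
    filter_upwards [hae_stopτ] with ω hω
    have h1 : |FbarD β k N (Y (τ ω) ω) (τ ω)| ≤ CF := by
      rw [abs_of_nonneg (hF0 _ _)]
      exact hFle _ hω.2 _
    have h2 := hsum_bd (τ ω) ω le_rfl
    calc ‖H ω‖ ≤ |FbarD β k N (Y (τ ω) ω) (τ ω)| + |∑ s ∈ Finset.Ico t (τ ω), ν (Y s ω)| := by
          rw [hHdef]
          exact abs_sub _ _
      _ ≤ CF + Cν' * (τ ω : ℝ) := add_le_add h1 h2
  have hg0int : Integrable (fun ω => CF + Cν' * (τ ω : ℝ)) P :=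
    ((integrable_const CF).add (hτint.const_mul Cν')).congr
      (Filter.Eventually.of_forall fun ω => rfl)
  have hgint : Integrable (fun ω => CF + Cη' + Cν' * (τ ω : ℝ)) P :=
    ((integrable_const (CF + Cη')).add (hτint.const_mul Cν')).congr
      (Filter.Eventually.of_forall fun ω => rfl)
  have hHint : Integrable H P :=
    Integrable.mono' hg0int hHmeas.aestronglyMeasurable hHbound
  -- the discrete "stopped value" process
  set S : ℕ → Ω → ℝ := fun n ω => if τ ω ≤ n then H ω else
      (η (Y n ω) n + FbarD β k N (Y n ω) n - ∑ s ∈ Finset.Ico t n, ν (Y s ω)) with hSdef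
  have hSmeas : ∀ n, Measurable (S n) := by
    intro n
    apply Measurable.ite (hτmeas measurableSet_Iic) hHmeas
    apply Measurable.sub
    · exact ((measurable_of_countable (fun i => η i n)).comp (hYmeas n)).add
        ((measurable_of_countable (fun i => FbarD β k N i n)).comp (hYmeas n))
    · exact Finset.measurable_sum _ fun s _ => (measurable_of_countable ν).comp (hYmeas s)
  have hSbound : ∀ n, t ≤ n → ∀ᵐ ω ∂P, ‖S n ω‖ ≤ CF + Cη' + Cν' * (τ ω : ℝ) := by
    intro n hn
    filter_upwards [hHbound, hae_supp n hn] with ω h1 h2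
    by_cases hτn : τ ω ≤ n
    · rw [hSdef]
      simp only [if_pos hτn]
      calc ‖H ω‖ ≤ CF + Cν' * (τ ω : ℝ) := h1
        _ ≤ CF + Cη' + Cν' * (τ ω : ℝ) := by linarith
    · rw [hSdef]
      simp only [if_neg hτn]
      have h3 := h2 (by omega)
      have hb1 : η (Y n ω) n ≤ Cη' := hCη'' _ _
      have hb1' : 0 ≤ η (Y n ω) n := hη0 _ _
      have hb2 : FbarD β k N (Y n ω) n ≤ CF := hFle _ (le_of_lt h3.2.2) _
      have hb2' : 0 ≤ FbarD β k N (Y n ω) n := hF0 _ _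
      have hb3 := hsum_bd n ω (by omega)
      rw [Real.norm_eq_abs, abs_le]
      rw [abs_le] at hb3
      have hτpos : (0:ℝ) ≤ Cν' * (τ ω : ℝ) := mul_nonneg hCν'0 (Nat.cast_nonneg _)
      constructor
      · linarith
      · linarith
  have hSint : ∀ n, t ≤ n → Integrable (S n) P := by
    intro n hn
    exact Integrable.mono' hgint (hSmeas n).aestronglyMeasurable (hSbound n hn)
  -- value at time t
  have hSt : ∫ ω, S t ω ∂P = η j t + FbarD β k N j t := by
    have hcongr : S t =ᵐ[P] fun _ => η j t + FbarD β k N j t := by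
      filter_upwards [hstart, hcont] with ω h1 h2
      have hτn : ¬ τ ω ≤ t := by omega
      rw [hSdef]
      simp only [if_neg hτn, h1, Finset.Ico_self, Finset.sum_empty, sub_zero]
    rw [integral_congr_ae hcongr, integral_const, probReal_univ, one_smul]
  -- one-step conservation
  have hstep : ∀ n, t ≤ n → ∫ ω, S (n+1) ω ∂P = ∫ ω, S n ω ∂P := by
    intro n hn
    set g : Ω → ℝ := fun ω =>
      (η (Y (n+1) ω) (n+1) + FbarD β k N (Y (n+1) ω) (n+1)) -
      (η (Y n ω) n + FbarD β k N (Y n ω) n) - ν (Y n ω) with hgdef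
    have hDae : (fun ω => S (n+1) ω - S n ω) =ᵐ[P] Set.indicator {ω | n < τ ω} g := by
      filter_upwards [hae_stop (n+1) (by omega)] with ω hst
      rcases lt_trichotomy (τ ω) (n+1) with h | h | h
      · have h1 : τ ω ≤ n := by omega
        have h2 : τ ω ≤ n+1 := by omega
        rw [hSdef]
        simp only [if_pos h1, if_pos h2, sub_self]
        rw [Set.indicator_of_notMem (by simp only [Set.mem_setOf_eq]; omega)]
      · have h1 : ¬ τ ω ≤ n := by omega
        have h2 : τ ω ≤ n+1 := by omega
        have hq := hst h
        have hηz : η (Y (n+1) ω) (n+1) = 0 := hcs2 _ _ hq.1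
        rw [hSdef]
        simp only [if_pos h2, if_neg h1]
        rw [Set.indicator_of_mem (show ω ∈ {ω | n < τ ω} by simp only [Set.mem_setOf_eq]; omega)]
        simp only [hHdef, h]
        rw [Finset.sum_Ico_succ_top hn]
        simp only [hgdef, hηz]
        ring
      · have h1 : ¬ τ ω ≤ n := by omega
        have h2 : ¬ τ ω ≤ n+1 := by omega
        rw [hSdef]
        simp only [if_neg h1, if_neg h2]
        rw [Set.indicator_of_mem (show ω ∈ {ω | n < τ ω} by simp only [Set.mem_setOf_eq]; omega)]
        rw [Finset.sum_Ico_succ_top hn]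
        simp only [hgdef]
        ring
    have hmτn : MeasurableSet {ω | n < τ ω} := hτmeas measurableSet_Ioi
    have hDint : Integrable (Set.indicator {ω | n < τ ω} g) P :=
      ((hSint (n+1) (by omega)).sub (hSint n hn)).congr hDae
    have hgon : IntegrableOn g {ω | n < τ ω} P := (integrable_indicator_iff hmτn).1 hDint
    have hU : {ω | n < τ ω} = ⋃ i : ℤ, {ω | n < τ ω ∧ Y n ω = i} := by
      ext ω
      simp only [Set.mem_setOf_eq, Set.mem_iUnion]
      exact ⟨fun h => ⟨Y n ω, h, rfl⟩, fun ⟨i, h, _⟩ => h⟩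
    have hzero : ∀ i : ℤ, ∫ ω in {ω | n < τ ω ∧ Y n ω = i}, g ω ∂P = 0 := by
      intro i
      by_cases hmz : P {ω | n < τ ω ∧ Y n ω = i} = 0
      · rw [Measure.restrict_eq_zero.2 hmz]
        exact integral_zero_measure g
      · have hpi : 0 < p i n := hsupp n hn i hmz
        have hCSi := hcs1 i n hpi
        have hUA : {ω | n < τ ω ∧ Y n ω = i ∧ Y (n+1) ω = i + 1} ⊆
            {ω | n < τ ω ∧ Y n ω = i} := fun ω hω => ⟨hω.1, hω.2.1⟩
        have hVA : {ω | n < τ ω ∧ Y n ω = i ∧ Y (n+1) ω = i - 1} ⊆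
            {ω | n < τ ω ∧ Y n ω = i} := fun ω hω => ⟨hω.1, hω.2.1⟩
        have hAsub : {ω | n < τ ω ∧ Y n ω = i} ⊆ {ω | n < τ ω} := fun ω hω => hω.1
        have hgA : Set.EqOn g (fun ω =>
            (η (Y (n+1) ω) (n+1) + FbarD β k N (Y (n+1) ω) (n+1)) -
            (η i n + FbarD β k N i n + ν i)) {ω | n < τ ω ∧ Y n ω = i} := by
          intro ω hω
          have h2 : Y n ω = i := hω.2
          simp only [hgdef]
          rw [h2]
          ring
        have hconstint : IntegrableOn (fun _ : Ω => η i n + FbarD β k N i n + ν i)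
            {ω | n < τ ω ∧ Y n ω = i} P :=
          integrableOn_const (measure_ne_top P _)
        have hg2on : IntegrableOn
            (fun ω => η (Y (n+1) ω) (n+1) + FbarD β k N (Y (n+1) ω) (n+1))
            {ω | n < τ ω ∧ Y n ω = i} P := by
          have h1 : IntegrableOn (fun ω => g ω + (η i n + FbarD β k N i n + ν i))
              {ω | n < τ ω ∧ Y n ω = i} P := (hgon.mono_set hAsub).add hconstint
          apply h1.congr_fun _ (mA n i)
          intro ω hω
          show g ω + (η i n + FbarD β k N i n + ν i) =
            η (Y (n+1) ω) (n+1) + FbarD β k N (Y (n+1) ω) (n+1)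
          simp only [hgA hω]
          ring
        have hAeq : ({ω | n < τ ω ∧ Y n ω = i} : Set Ω) =ᵐ[P]
            (({ω | n < τ ω ∧ Y n ω = i ∧ Y (n+1) ω = i + 1} ∪
             {ω | n < τ ω ∧ Y n ω = i ∧ Y (n+1) ω = i - 1} : Set Ω)) := by
          rw [ae_eq_set]
          constructor
          · exact hnull n hn i
          · have hempty : ({ω | n < τ ω ∧ Y n ω = i ∧ Y (n+1) ω = i + 1} ∪
                {ω | n < τ ω ∧ Y n ω = i ∧ Y (n+1) ω = i - 1}) \
                {ω | n < τ ω ∧ Y n ω = i} = ∅ := by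
              rw [Set.diff_eq_empty]
              exact Set.union_subset hUA hVA
            rw [hempty, measure_empty]
        have hdisj : Disjoint {ω | n < τ ω ∧ Y n ω = i ∧ Y (n+1) ω = i + 1}
            {ω | n < τ ω ∧ Y n ω = i ∧ Y (n+1) ω = i - 1} := by
          rw [Set.disjoint_left]
          rintro ω ⟨_, _, h1⟩ ⟨_, _, h2⟩
          omega
        have hUval : ∫ ω in {ω | n < τ ω ∧ Y n ω = i ∧ Y (n+1) ω = i + 1},
            (η (Y (n+1) ω) (n+1) + FbarD β k N (Y (n+1) ω) (n+1)) ∂P =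
            (P {ω | n < τ ω ∧ Y n ω = i} / 2).toReal *
              (η (i+1) (n+1) + FbarD β k N (i+1) (n+1)) := by
          rw [setIntegral_congr_fun (mU n i)
            (g := fun _ => η (i+1) (n+1) + FbarD β k N (i+1) (n+1))
            (fun ω hω => by rw [hω.2.2]),
            setIntegral_const, measureReal_def, (hwalk n hn i).1, smul_eq_mul]
        have hVval : ∫ ω in {ω | n < τ ω ∧ Y n ω = i ∧ Y (n+1) ω = i - 1},
            (η (Y (n+1) ω) (n+1) + FbarD β k N (Y (n+1) ω) (n+1)) ∂P =
            (P {ω | n < τ ω ∧ Y n ω = i} / 2).toReal *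
              (η (i-1) (n+1) + FbarD β k N (i-1) (n+1)) := by
          rw [setIntegral_congr_fun (mV n i)
            (g := fun _ => η (i-1) (n+1) + FbarD β k N (i-1) (n+1))
            (fun ω hω => by rw [hω.2.2]),
            setIntegral_const, measureReal_def, (hwalk n hn i).2, smul_eq_mul]
        have hAg2 : ∫ ω in {ω | n < τ ω ∧ Y n ω = i},
            (η (Y (n+1) ω) (n+1) + FbarD β k N (Y (n+1) ω) (n+1)) ∂P =
            (P {ω | n < τ ω ∧ Y n ω = i} / 2).toReal *
              (η (i+1) (n+1) + FbarD β k N (i+1) (n+1)) +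
            (P {ω | n < τ ω ∧ Y n ω = i} / 2).toReal *
              (η (i-1) (n+1) + FbarD β k N (i-1) (n+1)) := by
          rw [setIntegral_congr_set hAeq,
            setIntegral_union hdisj (mV n i) (hg2on.mono_set hUA) (hg2on.mono_set hVA),
            hUval, hVval]
        have htr : (P {ω | n < τ ω ∧ Y n ω = i} / 2).toReal =
            (P {ω | n < τ ω ∧ Y n ω = i}).toReal / 2 := by
          rw [ENNReal.toReal_div]
          norm_num
        calc ∫ ω in {ω | n < τ ω ∧ Y n ω = i}, g ω ∂P
            = ∫ ω in {ω | n < τ ω ∧ Y n ω = i},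
                ((η (Y (n+1) ω) (n+1) + FbarD β k N (Y (n+1) ω) (n+1)) -
                 (η i n + FbarD β k N i n + ν i)) ∂P :=
              setIntegral_congr_fun (mA n i) hgA
          _ = (∫ ω in {ω | n < τ ω ∧ Y n ω = i},
                (η (Y (n+1) ω) (n+1) + FbarD β k N (Y (n+1) ω) (n+1)) ∂P) -
              (P {ω | n < τ ω ∧ Y n ω = i}).toReal *
                (η i n + FbarD β k N i n + ν i) := by
              rw [integral_sub hg2on hconstint, setIntegral_const, measureReal_def, smul_eq_mul]
          _ = 0 := by
              rw [hAg2, htr]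
              have hb : (η (i+1) (n+1) + FbarD β k N (i+1) (n+1) +
                  (η (i-1) (n+1) + FbarD β k N (i-1) (n+1))) / 2 -
                  (η i n + FbarD β k N i n) - ν i = 0 := by linarith
              set x := (P {ω | n < τ ω ∧ Y n ω = i}).toReal
              linear_combination x * hb
    have key : ∫ ω, (S (n+1) ω - S n ω) ∂P = 0 := by
      rw [integral_congr_ae hDae, integral_indicator hmτn]
      have hgon' : IntegrableOn g (⋃ i : ℤ, {ω | n < τ ω ∧ Y n ω = i}) P := by
        rw [← hU]; exact hgon
      rw [show Measure.restrict P {ω | n < τ ω} =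
            Measure.restrict P (⋃ i : ℤ, {ω | n < τ ω ∧ Y n ω = i}) by rw [← hU]]
      rw [integral_iUnion (mA n) ?_ hgon']
      · simp only [hzero, tsum_zero]
      · intro i i' hii'
        simp only [Function.onFun, Set.disjoint_left]
        rintro ω ⟨_, h1⟩ ⟨_, h2⟩
        exact hii' (h1 ▸ h2 ▸ rfl)
    have hsub := integral_sub (hSint (n+1) (by omega)) (hSint n hn)
    rw [key] at hsub
    linarith [hsub]
  have hconst : ∀ n, t ≤ n → ∫ ω, S n ω ∂P = η j t + FbarD β k N j t := by
    intro n hn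
    induction n, hn using Nat.le_induction with
    | base => exact hSt
    | succ n hn ih => rw [hstep n hn, ih]
  have hlim : Tendsto (fun n : ℕ => ∫ ω, S (n + t) ω ∂P) atTop (nhds (∫ ω, H ω ∂P)) := by
    apply tendsto_integral_of_dominated_convergence (fun ω => CF + Cη' + Cν' * (τ ω : ℝ))
    · intro n
      exact (hSmeas _).aestronglyMeasurable
    · exact hgint
    · intro n
      exact hSbound (n + t) (by omega)
    · refine Eventually.of_forall fun ω => ?_
      have hev : ∀ᶠ n in atTop, S (n + t) ω = H ω := by
        rw [eventually_atTop]
        exact ⟨τ ω, fun n hn => by rw [hSdef]; simp only [if_pos (by omega : τ ω ≤ n + t)]⟩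
      exact Tendsto.congr' (hev.mono fun n h => h.symm) tendsto_const_nhds
  have hfinal : Tendsto (fun _ : ℕ => η j t + FbarD β k N j t) atTop (nhds (∫ ω, H ω ∂P)) :=
    hlim.congr fun n => hconst (n + t) (by omega)
  exact (tendsto_nhds_unique hfinal tendsto_const_nhds).symm
end
end
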